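/- With Φ and φ as defined (Φ maps a perfect matching/permutation F of [m] to the walk of its longest-planar-matching profile values, and φ maps a walk back to a matching by crossing-matching the level sets A_k and B_k), one has φ(Φ(F)) = F for every perfect matching F. -/

import Mathlib

/-- `a_i`: the maximum size of a planar matching of the perfect matching given by
the permutation `σ` that uses only pairs `(i', σ i')` with `i' ≤ i` and contains
the pair `(i, σ i)`; a planar matching is a set of indices on which `σ` is
strictly increasing. -/
def aVal (m : ℕ) (σ : Equiv.Perm (Fin m)) (i : Fin m) : ℕ :=
  (Finset.univ.filter (fun s : Finset (Fin m) =>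
    i ∈ s ∧ (∀ x ∈ s, x ≤ i) ∧ ∀ x ∈ s, ∀ y ∈ s, x < y → σ x < σ y)).sup
    Finset.card

/-- `b_j`: the maximum size of a planar matching of `σ` using only pairs with
right endpoint at most `j` and containing the pair `(σ⁻¹ j, j)`. -/
def bVal (m : ℕ) (σ : Equiv.Perm (Fin m)) (j : Fin m) : ℕ :=
  aVal m σ⁻¹ j

/-- The quasi-configuration `φ(w)` of a representative walk
`w = a₁⋯a_m | b₁⋯b_m`: for each level `k`, the initial segment of
`A_k = {i : a i = k}` of size `min |A_k| |B_k|` is matched in the crossing way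
with the terminal segment of `B_k = {j : b j = k}` of the same size. A left
index `i` is paired with a right index `j` iff they are on the same level, the
rank of `i` from the start of `A_k` equals the rank of `j` from the end of
`B_k`, and this common rank is less than `min |A_k| |B_k|`. -/
def phiMatch (m : ℕ) (a b : Fin m → ℕ) : Set (Fin m × Fin m) :=
  {p : Fin m × Fin m |
    a p.1 = b p.2 ∧
    (Finset.univ.filter (fun i' : Fin m => a i' = a p.1 ∧ i' < p.1)).card =
      (Finset.univ.filter (fun j' : Fin m => b j' = b p.2 ∧ p.2 < j')).card ∧
    (Finset.univ.filter (fun i' : Fin m => a i' = a p.1 ∧ i' < p.1)).card <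
      min (Finset.univ.filter (fun i' : Fin m => a i' = a p.1)).card
        (Finset.univ.filter (fun j' : Fin m => b j' = b p.2)).card}

lemma le_aVal (m : ℕ) (σ : Equiv.Perm (Fin m)) (i : Fin m) (s : Finset (Fin m))
    (h1 : i ∈ s) (h2 : ∀ x ∈ s, x ≤ i) (h3 : ∀ x ∈ s, ∀ y ∈ s, x < y → σ x < σ y) :
    s.card ≤ aVal m σ i :=
  Finset.le_sup (by simp only [Finset.mem_filter, Finset.mem_univ, true_and]; exact ⟨h1, h2, h3⟩)

lemma aVal_exists (m : ℕ) (σ : Equiv.Perm (Fin m)) (i : Fin m) :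
    ∃ s : Finset (Fin m), i ∈ s ∧ (∀ x ∈ s, x ≤ i) ∧
      (∀ x ∈ s, ∀ y ∈ s, x < y → σ x < σ y) ∧ s.card = aVal m σ i := by
  have hne : (Finset.univ.filter (fun s : Finset (Fin m) =>
      i ∈ s ∧ (∀ x ∈ s, x ≤ i) ∧ ∀ x ∈ s, ∀ y ∈ s, x < y → σ x < σ y)).Nonempty := by
    refine ⟨{i}, ?_⟩
    simp
  obtain ⟨s, hs, hcard⟩ := Finset.exists_mem_eq_sup _ hne Finset.card
  simp only [Finset.mem_filter] at hs
  exact ⟨s, hs.2.1, hs.2.2.1, hs.2.2.2, hcard.symm⟩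

lemma aVal_le_inv (m : ℕ) (σ : Equiv.Perm (Fin m)) (i : Fin m) :
    aVal m σ i ≤ aVal m σ⁻¹ (σ i) := by
  obtain ⟨s, h1, h2, h3, hc⟩ := aVal_exists m σ i
  rw [← hc]
  have hinj : Set.InjOn σ s := fun x _ y _ h => σ.injective h
  rw [← Finset.card_image_of_injOn hinj]
  refine le_aVal _ _ _ _ (Finset.mem_image_of_mem _ h1) ?_ ?_
  · rintro x hx
    obtain ⟨y, hy, rfl⟩ := Finset.mem_image.mp hx
    rcases lt_trichotomy y i with h | h | h
    · exact le_of_lt (h3 y hy i h1 h)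
    · subst h; exact le_refl _
    · exact absurd (h2 y hy) (not_le.mpr h)
  · rintro x hx y hy hxy
    obtain ⟨x', hx', rfl⟩ := Finset.mem_image.mp hx
    obtain ⟨y', hy', rfl⟩ := Finset.mem_image.mp hy
    simp only [Equiv.Perm.coe_inv, Equiv.symm_apply_apply]
    rcases lt_trichotomy x' y' with h | h | h
    · exact h
    · subst h; exact absurd hxy (lt_irrefl _)
    · exact absurd (h3 y' hy' x' hx' h) (not_lt.mpr (le_of_lt hxy))

lemma aVal_eq_bVal (m : ℕ) (σ : Equiv.Perm (Fin m)) (i : Fin m) :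
    aVal m σ i = bVal m σ (σ i) := by
  refine le_antisymm (aVal_le_inv m σ i) ?_
  have := aVal_le_inv m σ⁻¹ (σ i)
  simpa [bVal] using this

lemma aVal_lt_of_lt (m : ℕ) (σ : Equiv.Perm (Fin m)) {i i' : Fin m}
    (h : i < i') (hσ : σ i < σ i') : aVal m σ i < aVal m σ i' := by
  obtain ⟨s, h1, h2, h3, hc⟩ := aVal_exists m σ i
  have hi' : i' ∉ s := fun hmem => absurd (h2 i' hmem) (not_le.mpr h)
  have : (insert i' s).card ≤ aVal m σ i' := by
    refine le_aVal _ _ _ _ (Finset.mem_insert_self _ _) ?_ ?_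
    · intro x hx
      rcases Finset.mem_insert.mp hx with rfl | hx
      · exact le_refl _
      · exact le_trans (h2 x hx) (le_of_lt h)
    · intro x hx y hy hxy
      have hxs : x ∈ s := by
        rcases Finset.mem_insert.mp hx with hxe | hxs
        · exfalso
          rcases Finset.mem_insert.mp hy with hye | hys
          · exact absurd (hxe.trans hye.symm) hxy.ne
          · subst hxe; exact absurd (le_trans (h2 y hys) h.le) (not_le.mpr hxy)
        · exact hxs
      rcases Finset.mem_insert.mp hy with hye | hys
      · subst hye
        have hxi : σ x ≤ σ i := by
          rcases eq_or_lt_of_le (h2 x hxs) with heq | hlt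
          · exact le_of_eq (congrArg σ heq)
          · exact (h3 x hxs i h1 hlt).le
        exact lt_of_le_of_lt hxi hσ
      · exact h3 x hxs y hys hxy
  rw [Finset.card_insert_of_notMem hi'] at this
  omega

/-- within a level, σ is decreasing -/
lemma sigma_gt (m : ℕ) (σ : Equiv.Perm (Fin m)) {i i' : Fin m}
    (h : i' < i) (hlev : aVal m σ i' = aVal m σ i) : σ i < σ i' := by
  by_contra hcon
  push_neg at hcon
  rcases eq_or_lt_of_le hcon with heq | hlt
  · exact h.ne (σ.injective heq)
  · exact absurd hlev (ne_of_lt (aVal_lt_of_lt m σ h hlt))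

lemma card_level_lt (m : ℕ) (σ : Equiv.Perm (Fin m)) (i : Fin m) :
    (Finset.univ.filter (fun i' : Fin m => aVal m σ i' = aVal m σ i ∧ i' < i)).card =
    (Finset.univ.filter (fun j' : Fin m => bVal m σ j' = bVal m σ (σ i) ∧ σ i < j')).card := by
  apply Finset.card_bij (fun i' _ => σ i')
  · intro i' hi'
    simp only [Finset.mem_filter, Finset.mem_univ, true_and] at hi' ⊢
    exact ⟨by rw [← aVal_eq_bVal, ← aVal_eq_bVal, hi'.1],
      sigma_gt m σ hi'.2 hi'.1⟩
  · intro x hx y hy h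
    exact σ.injective h
  · intro j' hj'
    simp only [Finset.mem_filter, Finset.mem_univ, true_and] at hj'
    refine ⟨σ⁻¹ j', ?_, by simp⟩
    simp only [Finset.mem_filter, Finset.mem_univ, true_and]
    have hlev : aVal m σ (σ⁻¹ j') = aVal m σ i := by
      have h1 := aVal_eq_bVal m σ (σ⁻¹ j')
      have h2 := aVal_eq_bVal m σ i
      rw [(Equiv.Perm.eq_inv_iff_eq (f := σ) (x := σ⁻¹ j') (y := j')).mp rfl] at h1
      rw [h1, h2, hj'.1]
    refine ⟨hlev, ?_⟩
    rcases lt_trichotomy (σ⁻¹ j') i with h | h | h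
    · exact h
    · exfalso
      have hji : j' = σ i := by rw [← h, (Equiv.Perm.eq_inv_iff_eq (f := σ) (x := σ⁻¹ j') (y := j')).mp rfl]
      rw [hji] at hj'
      exact absurd hj'.2 (lt_irrefl _)
    · exfalso
      have := sigma_gt m σ h hlev.symm
      rw [(Equiv.Perm.eq_inv_iff_eq (f := σ) (x := σ⁻¹ j') (y := j')).mp rfl] at this
      exact absurd (lt_trans hj'.2 this) (lt_irrefl _)

lemma card_level_eq (m : ℕ) (σ : Equiv.Perm (Fin m)) (i : Fin m) :
    (Finset.univ.filter (fun i' : Fin m => aVal m σ i' = aVal m σ i)).card =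
    (Finset.univ.filter (fun j' : Fin m => bVal m σ j' = bVal m σ (σ i))).card := by
  apply Finset.card_bij (fun i' _ => σ i')
  · intro i' hi'
    simp only [Finset.mem_filter, Finset.mem_univ, true_and] at hi' ⊢
    rw [← aVal_eq_bVal, ← aVal_eq_bVal, hi']
  · intro x hx y hy h
    exact σ.injective h
  · intro j' hj'
    simp only [Finset.mem_filter, Finset.mem_univ, true_and] at hj'
    refine ⟨σ⁻¹ j', ?_, by simp⟩
    simp only [Finset.mem_filter, Finset.mem_univ, true_and]
    have h1 := aVal_eq_bVal m σ (σ⁻¹ j')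
    have h2 := aVal_eq_bVal m σ i
    rw [(Equiv.Perm.eq_inv_iff_eq (f := σ) (x := σ⁻¹ j') (y := j')).mp rfl] at h1
    rw [h1, h2, hj']

lemma card_gt_lt (m : ℕ) (f : Fin m → ℕ) {x y : Fin m} (hxy : f x = f y) (hlt : x < y) :
    (Finset.univ.filter (fun z : Fin m => f z = f y ∧ y < z)).card <
    (Finset.univ.filter (fun z : Fin m => f z = f x ∧ x < z)).card := by
  apply Finset.card_lt_card
  rw [Finset.ssubset_iff_of_subset]
  · refine ⟨y, ?_, ?_⟩
    · simp only [Finset.mem_filter, Finset.mem_univ, true_and]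
      exact ⟨hxy.symm, hlt⟩
    · simp
  · intro z hz
    simp only [Finset.mem_filter, Finset.mem_univ, true_and] at hz ⊢
    exact ⟨hz.1.trans hxy.symm, hlt.trans hz.2⟩

lemma eq_of_card_gt_eq (m : ℕ) (f : Fin m → ℕ) (x y : Fin m) (hxy : f x = f y)
    (h : (Finset.univ.filter (fun z : Fin m => f z = f x ∧ x < z)).card =
      (Finset.univ.filter (fun z : Fin m => f z = f y ∧ y < z)).card) : x = y := by
  rcases lt_trichotomy x y with hlt | heq | hlt
  · exact absurd h (ne_of_gt (card_gt_lt m f hxy hlt))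
  · exact heq
  · exact absurd h (ne_of_lt (card_gt_lt m f hxy.symm hlt))

/-- `φ(Φ(F)) = F`: applying the crossing-matching construction `φ` to the walk
`Φ(F) = a₁⋯a_m | b₁⋯b_m` of longest-planar-matching profile values of a perfect
matching `F` (given by the permutation `σ`) recovers exactly the pairs of `F`. -/
theorem phi_Phi_eq_self (m : ℕ) (σ : Equiv.Perm (Fin m)) :
    phiMatch m (aVal m σ) (bVal m σ) = {p : Fin m × Fin m | σ p.1 = p.2} := by
  ext ⟨i, j⟩
  simp only [phiMatch, Set.mem_setOf_eq]
  constructor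
  · rintro ⟨h1, h2, _⟩
    have hbj : bVal m σ (σ i) = bVal m σ j := by
      rw [← aVal_eq_bVal m σ i]; exact h1
    exact eq_of_card_gt_eq m (bVal m σ) (σ i) j hbj
      ((card_level_lt m σ i).symm.trans h2)
  · rintro h
    subst h
    refine ⟨aVal_eq_bVal m σ i, card_level_lt m σ i, ?_⟩
    rw [← card_level_eq m σ i, min_self]
    have hsub : (Finset.univ.filter (fun i' : Fin m => aVal m σ i' = aVal m σ i ∧ i' < i)) ⊆
        (Finset.univ.filter (fun i' : Fin m => aVal m σ i' = aVal m σ i)) := by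
      intro z hz
      rw [Finset.mem_filter] at hz ⊢
      exact ⟨hz.1, hz.2.1⟩
    have hmem1 : i ∈ (Finset.univ.filter (fun i' : Fin m => aVal m σ i' = aVal m σ i)) :=
      Finset.mem_filter.mpr ⟨Finset.mem_univ i, rfl⟩
    have hmem2 : i ∉ (Finset.univ.filter (fun i' : Fin m => aVal m σ i' = aVal m σ i ∧ i' < i)) := by
      rw [Finset.mem_filter]
      rintro ⟨-, -, hcon⟩
      exact lt_irrefl i hcon
    exact Finset.card_lt_card ((Finset.ssubset_iff_of_subset hsub).mpr ⟨i, hmem1, hmem2⟩)
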